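/- Every chordal graph G of maximum degree Δ satisfies χ_pcf(G) ≤ 2Δ + 1. -/

import Mathlib

open SimpleGraph

/-- A proper conflict-free coloring: proper, and every non-isolated vertex has a color
appearing exactly once in its open neighborhood. -/
def IsPCFColoring {V : Type*} (G : SimpleGraph V) {n : ℕ} (c : V → Fin n) : Prop :=
  (∀ u v, G.Adj u v → c u ≠ c v) ∧
  ∀ v : V, (G.neighborSet v).Nonempty →
    ∃ k : Fin n, ∃! u, u ∈ G.neighborSet v ∧ c u = k

/-- The PCF chromatic number. -/
noncomputable def pcfChromNum {V : Type*} (G : SimpleGraph V) : ℕ :=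
  sInf {n | ∃ c : V → Fin n, IsPCFColoring G c}

/-- The chromatic number (as a natural number). -/
noncomputable def chromNum {V : Type*} (G : SimpleGraph V) : ℕ :=
  sInf {n | G.Colorable n}
/-- A graph is chordal iff it has no induced cycle of length at least 4. -/
def Chordal {V : Type*} (G : SimpleGraph V) : Prop :=
  ∀ n : ℕ, 4 ≤ n → IsEmpty (SimpleGraph.cycleGraph n ↪g G)


open List

section Chains
variable {V : Type*} (G : SimpleGraph V)

/-- A chain (walk as a list) from `a` to `b` with all elements in `t`. -/
def IsChainT (t : Set V) (a b : V) (l : List V) : Prop :=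
  l.IsChain G.Adj ∧ l.head? = some a ∧ l.getLast? = some b ∧ ∀ x ∈ l, x ∈ t

/-- Connectivity within a vertex set. -/
def Conn (t : Set V) (a b : V) : Prop := ∃ l, IsChainT G t a b l

variable {G}

lemma IsChainT.ne_nil {t a b l} (h : IsChainT G t a b l) : l ≠ [] := by
  rintro rfl; simp [IsChainT] at h

lemma IsChainT.mem_left {t a b l} (h : IsChainT G t a b l) : a ∈ l := by
  obtain ⟨-, h2, -, -⟩ := h; exact List.mem_of_mem_head? (by rw [h2]; rfl)

lemma IsChainT.mem_right {t a b l} (h : IsChainT G t a b l) : b ∈ l := by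
  obtain ⟨-, -, h3, -⟩ := h; exact List.mem_of_mem_getLast? (by rw [h3]; rfl)

lemma conn_refl {t : Set V} {a : V} (ha : a ∈ t) : Conn G t a a :=
  ⟨[a], by simp [IsChainT], by simpa⟩

lemma conn_mem {t : Set V} {a b : V} (h : Conn G t a b) : a ∈ t ∧ b ∈ t := by
  obtain ⟨l, hl⟩ := h
  exact ⟨hl.2.2.2 _ hl.mem_left, hl.2.2.2 _ hl.mem_right⟩

lemma IsChainT.reverse {t : Set V} {a b l} (h : IsChainT G t a b l) :
    IsChainT G t b a l.reverse := by
  obtain ⟨h1, h2, h3, h4⟩ := h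
  refine ⟨?_, ?_, ?_, ?_⟩
  · rw [List.isChain_reverse]
    exact h1.imp fun x y hxy => hxy.symm
  · rwa [List.head?_reverse]
  · rwa [List.getLast?_reverse]
  · simpa using h4

lemma conn_symm {t : Set V} {a b : V} (h : Conn G t a b) : Conn G t b a := by
  obtain ⟨l, hl⟩ := h; exact ⟨l.reverse, hl.reverse⟩

lemma conn_cons {t : Set V} {a a' b : V} (hadj : G.Adj a a') (ha : a ∈ t)
    (h : Conn G t a' b) : Conn G t a b := by
  obtain ⟨l, h1, h2, h3, h4⟩ := h
  refine ⟨a :: l, List.isChain_cons.2 ⟨fun y hy => ?_, h1⟩, by simp, ?_, ?_⟩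
  · rw [h2] at hy; cases hy; exact hadj
  · rw [List.getLast?_cons, h3]
    · simp
  · intro x hx; rcases List.mem_cons.1 hx with rfl | hx
    · exact ha
    · exact h4 x hx

lemma IsChainT.conn_trans {t : Set V} {a b c : V} {l : List V}
    (h : IsChainT G t a b l) (h2 : Conn G t b c) : Conn G t a c := by
  induction l generalizing a with
  | nil => exact absurd rfl h.ne_nil
  | cons x l ih =>
    obtain ⟨hc, hh, hl, hmem⟩ := h
    simp only [List.head?_cons, Option.some.injEq] at hh
    subst hh
    cases l with
    | nil =>
      simp only [List.getLast?_singleton, Option.some.injEq] at hl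
      subst hl; exact h2
    | cons y l' =>
      rw [List.isChain_cons_cons] at hc
      refine conn_cons hc.1 (hmem _ (by simp)) (ih (a := y) ⟨hc.2, rfl, ?_, ?_⟩)
      · rw [← hl, List.getLast?_cons_cons]
      · intro z hz; exact hmem z (List.mem_cons_of_mem _ hz)

lemma conn_trans {t : Set V} {a b c : V} (h1 : Conn G t a b) (h2 : Conn G t b c) :
    Conn G t a c := by
  obtain ⟨l, hl⟩ := h1; exact hl.conn_trans h2

lemma conn_mono {t t' : Set V} (hsub : t ⊆ t') {a b : V} (h : Conn G t a b) :
    Conn G t' a b := by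
  obtain ⟨l, h1, h2, h3, h4⟩ := h
  exact ⟨l, h1, h2, h3, fun x hx => hsub (h4 x hx)⟩

lemma conn_adj {t : Set V} {a b : V} (hadj : G.Adj a b) (ha : a ∈ t) (hb : b ∈ t) :
    Conn G t a b := conn_cons hadj ha (conn_refl hb)

/-- every element of a chain is reachable from the start. -/
lemma IsChainT.conn_of_mem {t : Set V} {a b x : V} {l : List V}
    (h : IsChainT G t a b l) (hx : x ∈ l) : Conn G t a x := by
  induction l generalizing a with
  | nil => exact absurd rfl h.ne_nil
  | cons y l ih =>
    obtain ⟨hc, hh, hl, hmem⟩ := h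
    simp only [List.head?_cons, Option.some.injEq] at hh
    subst hh
    rcases List.mem_cons.1 hx with rfl | hx
    · exact conn_refl (hmem _ (by simp))
    cases l with
    | nil => simp at hx
    | cons z l' =>
      rw [List.isChain_cons_cons] at hc
      refine conn_cons hc.1 (hmem _ (by simp)) (ih (a := z) ⟨hc.2, rfl, ?_, ?_⟩ hx)
      · rw [← hl, List.getLast?_cons_cons]
      · intro w hw; exact hmem w (List.mem_cons_of_mem _ hw)

/-- First-occurrence splitting. -/
lemma exists_first_split {l : List V} {z : V} (hz : z ∈ l) :
    ∃ l1 l2, l = l1 ++ z :: l2 ∧ z ∉ l1 := by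
  induction l with
  | nil => simp at hz
  | cons a l ih =>
    by_cases h : z = a
    · exact ⟨[], l, by simp [h], by simp⟩
    · rcases List.mem_cons.1 hz with rfl | hz
      · exact absurd rfl h
      obtain ⟨l1, l2, rfl, hnl⟩ := ih hz
      exact ⟨a :: l1, l2, by simp, by simp [hnl]; exact h⟩

end Chains

section S2
variable {V : Type*} {G : SimpleGraph V}

lemma getLast?_take_of_lt {α : Type*} {l : List α} {i : ℕ} (h : i < l.length) :
    (l.take (i+1)).getLast? = some (l[i]'h) := by
  rw [List.getLast?_take, if_neg (by omega)]
  simp only [Nat.add_sub_cancel, List.getElem?_eq_getElem h]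
  rfl

lemma IsChainT.length_pos {t : Set V} {x y : V} {l : List V} (h : IsChainT G t x y l) :
    0 < l.length := by
  cases l with
  | nil => exact absurd rfl h.ne_nil
  | cons a l => simp

lemma IsChainT.getElem_zero {t : Set V} {x y : V} {l : List V} (h : IsChainT G t x y l) :
    l[0]'h.length_pos = x := by
  have := h.2.1
  rw [List.head?_eq_getElem?, List.getElem?_eq_getElem h.length_pos, Option.some_inj] at this
  exact this

lemma IsChainT.getElem_last {t : Set V} {x y : V} {l : List V} (h : IsChainT G t x y l) :
    l[l.length - 1]'(by have := h.length_pos; omega) = y := by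
  have := h.2.2.1
  rw [List.getLast?_eq_getElem?, List.getElem?_eq_getElem
    (show l.length - 1 < l.length by have := h.length_pos; omega), Option.some_inj] at this
  exact this

lemma IsChainT.getElem_mem' {t : Set V} {x y : V} {l : List V} (h : IsChainT G t x y l)
    {i : ℕ} (hi : i < l.length) : l[i] ∈ t := h.2.2.2 _ (List.getElem_mem hi)

lemma IsChainT.shortcut {t : Set V} {x y : V} {l : List V} (h : IsChainT G t x y l)
    {i j : ℕ} (hij : i < j) (hj : j < l.length)
    (hadj : G.Adj (l[i]'(hij.trans hj)) (l[j]'hj)) :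
    ∃ l', IsChainT G t x y l' ∧ l'.length + (j - i) = l.length + 1 := by
  obtain ⟨hc, hh, hl, hm⟩ := h
  refine ⟨l.take (i+1) ++ l.drop j, ⟨?_, ?_, ?_, ?_⟩, ?_⟩
  · rw [List.isChain_append]
    refine ⟨hc.take _, hc.drop _, fun a ha b hb => ?_⟩
    rw [getLast?_take_of_lt (show i < l.length by omega)] at ha
    rw [List.head?_drop, List.getElem?_eq_getElem hj] at hb
    simp only [Option.mem_def, Option.some_inj] at ha hb
    rw [← ha, ← hb]
    exact hadj
  · rw [List.head?_append, List.head?_take]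
    simp [hh]
  · rw [List.getLast?_append_of_ne_nil _ (by rw [Ne, List.drop_eq_nil_iff]; omega),
      List.getLast?_drop, if_neg (by omega), hl]
  · intro z hz
    rcases List.mem_append.1 hz with hz | hz
    · exact hm _ (List.mem_of_mem_take hz)
    · exact hm _ (List.mem_of_mem_drop hz)
  · simp only [List.length_append, List.length_take, List.length_drop]
    omega

lemma IsChainT.shortcut_dup {t : Set V} {x y : V} {l : List V} (h : IsChainT G t x y l)
    {i j : ℕ} (hij : i < j) (hj : j < l.length)
    (heq : (l[i]'(hij.trans hj)) = l[j]'hj) :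
    ∃ l', IsChainT G t x y l' ∧ l'.length + (j - i) = l.length := by
  have hlast := h.getElem_last
  obtain ⟨hc, hh, hl, hm⟩ := h
  refine ⟨l.take (i+1) ++ l.drop (j+1), ⟨?_, ?_, ?_, ?_⟩, ?_⟩
  · rw [List.isChain_append]
    refine ⟨hc.take _, hc.drop _, fun a ha b hb => ?_⟩
    rw [getLast?_take_of_lt (show i < l.length by omega)] at ha
    rw [List.head?_drop] at hb
    have hj1 : j + 1 < l.length := by
      rcases Nat.lt_or_ge (j+1) l.length with h' | h'
      · exact h'
      · rw [List.getElem?_eq_none (by omega)] at hb; simp at hb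
    rw [List.getElem?_eq_getElem hj1] at hb
    simp only [Option.mem_def, Option.some_inj] at ha hb
    rw [← ha, ← hb, heq]
    exact List.isChain_iff_getElem.1 hc j (by omega)
  · rw [List.head?_append, List.head?_take]
    simp [hh]
  · rcases Nat.lt_or_ge (j+1) l.length with h' | h'
    · rw [List.getLast?_append_of_ne_nil _ (by rw [Ne, List.drop_eq_nil_iff]; omega),
        List.getLast?_drop, if_neg (by omega), hl]
    · have hdrop : l.drop (j+1) = [] := List.drop_eq_nil_iff.2 (by omega)
      have hjl : j = l.length - 1 := by omega
      rw [hdrop, List.append_nil, getLast?_take_of_lt (show i < l.length by omega),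
        Option.some_inj, heq]
      subst hjl
      exact hlast
  · intro z hz
    rcases List.mem_append.1 hz with hz | hz
    · exact hm _ (List.mem_of_mem_take hz)
    · exact hm _ (List.mem_of_mem_drop hz)
  · simp only [List.length_append, List.length_take, List.length_drop]
    omega

/-- minimal-length chains between nonadjacent x,y through `t` give induced paths. -/
lemma exists_induced_path {t : Set V} {x y : V} (hxy : x ≠ y) (hnadj : ¬ G.Adj x y)
    (h : Conn G (insert x (insert y t)) x y) :
    ∃ l : List V, IsChainT G (insert x (insert y t)) x y l ∧ 3 ≤ l.length ∧ l.Nodup ∧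
      ∀ i j : ℕ, (hij : i < j) → (hj : j < l.length) →
        (G.Adj (l[i]'(hij.trans hj)) (l[j]'hj) ↔ j = i + 1) := by
  classical
  set T := insert x (insert y t) with hT
  have hne : {k | ∃ l : List V, IsChainT G T x y l ∧ l.length = k}.Nonempty := by
    obtain ⟨l, hl⟩ := h; exact ⟨l.length, l, hl, rfl⟩
  obtain ⟨l, hl, hlen⟩ := Nat.sInf_mem hne
  have hmin : ∀ l' : List V, IsChainT G T x y l' → l.length ≤ l'.length := by
    intro l' hl'
    rw [hlen]; exact Nat.sInf_le ⟨l', hl', rfl⟩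
  have hnodup : l.Nodup := by
    by_contra hnd
    rw [List.nodup_iff_injective_get] at hnd
    simp only [Function.Injective, not_forall] at hnd
    obtain ⟨a, b, heq, hne'⟩ := hnd
    rcases Ne.lt_or_gt (show (a : ℕ) ≠ b by simpa [Fin.ext_iff] using hne') with hab | hab
    · obtain ⟨l', hl', hlen'⟩ := hl.shortcut_dup hab b.isLt (by simpa [List.get_eq_getElem] using heq)
      have := hmin l' hl'
      omega
    · obtain ⟨l', hl', hlen'⟩ := hl.shortcut_dup hab a.isLt (by simpa [List.get_eq_getElem] using heq.symm)
      have := hmin l' hl'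
      omega
  have hchord : ∀ i j : ℕ, (hij : i < j) → (hj : j < l.length) →
      (G.Adj (l[i]'(hij.trans hj)) (l[j]'hj) ↔ j = i + 1) := by
    intro i j hij hj
    constructor
    · intro hadj
      by_contra hne'
      obtain ⟨l', hl', hlen'⟩ := hl.shortcut hij hj hadj
      have := hmin l' hl'
      omega
    · rintro rfl
      exact List.isChain_iff_getElem.1 hl.1 i (by omega)
  have h3 : 3 ≤ l.length := by
    have h1 : 0 < l.length := hl.length_pos
    by_contra hlt
    have h0 := hl.getElem_zero
    have hlast := hl.getElem_last
    rcases Nat.lt_or_ge l.length 2 with h2 | h2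
    · have e : l.length - 1 = 0 := by omega
      simp only [e] at hlast
      rw [h0] at hlast
      exact hxy hlast
    · have hll : l.length = 2 := by omega
      apply hnadj
      have := (hchord 0 1 (by omega) (by omega)).2 rfl
      simp only [show l.length - 1 = 1 by omega] at hlast
      rwa [h0, hlast] at this
  exact ⟨l, hl, h3, hnodup, hchord⟩
end S2

section S3
variable {V : Type*} {G : SimpleGraph V}

lemma fin_sub_val_big {m : ℕ} (i j : Fin m) (h : (i:ℕ) < j) :
    ((i - j) : Fin m).val = m - ((j:ℕ) - i) := by
  rw [Fin.sub_def]
  simp only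
  rw [Nat.mod_eq_of_lt (by omega)]
  omega

lemma fin_sub_val_small {m : ℕ} (i j : Fin m) (h : (i:ℕ) < j) :
    ((j - i) : Fin m).val = (j:ℕ) - i := by
  rw [Fin.sub_def]
  simp only
  have e : m - (i:ℕ) + j = ((j:ℕ) - i) + m := by omega
  rw [e, Nat.add_mod_right, Nat.mod_eq_of_lt (by omega)]

lemma chordal_no_cycle (hch : Chordal G) {A B : Set V} {x y : V}
    (hAB : ∀ v, v ∈ A → v ∈ B → False)
    (hcross : ∀ u v, u ∈ A → v ∈ B → ¬ G.Adj u v)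
    (hxA : x ∉ A) (hyA : y ∉ A) (hxB : x ∉ B) (hyB : y ∉ B)
    (hxy : x ≠ y) (hnadj : ¬ G.Adj x y)
    (hA : Conn G (insert x (insert y A)) x y)
    (hB : Conn G (insert x (insert y B)) x y) : False := by
  obtain ⟨lA, hlA, hlenA, hndA, hadjA⟩ := exists_induced_path hxy hnadj hA
  obtain ⟨lB, hlB, hlenB, hndB, hadjB⟩ := exists_induced_path hxy hnadj hB
  set p := lA.length - 2 with hp
  set q := lB.length - 2 with hq
  have hpA : lA.length = p + 2 := by omega
  have hqB : lB.length = q + 2 := by omega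
  have hp1 : 1 ≤ p := by omega
  have hq1 : 1 ≤ q := by omega
  set m := p + q + 2 with hm
  have hm4 : 4 ≤ m := by omega
  -- endpoint identifications
  have zeroA : lA[0]'(by omega) = x := hlA.getElem_zero
  have zeroB : lB[0]'(by omega) = x := hlB.getElem_zero
  have lastA : lA[p+1]'(by omega) = y := by
    have h := hlA.getElem_last
    simpa only [show lA.length - 1 = p + 1 by omega] using h
  have lastB : lB[q+1]'(by omega) = y := by
    have h := hlB.getElem_last
    simpa only [show lB.length - 1 = q + 1 by omega] using h
  -- interior membership
  have memA : ∀ k, (h0 : 0 < k) → (h1 : k < p + 1) → lA[k]'(by omega) ∈ A := by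
    intro k h0 h1
    have hmem := hlA.getElem_mem' (show k < lA.length by omega)
    rcases hmem with h | h | h
    · exfalso
      rw [← zeroA] at h
      have := (List.Nodup.get_inj_iff hndA (i := ⟨k, by omega⟩) (j := ⟨0, by omega⟩)).1 ?_
      · simp only [Fin.mk.injEq] at this; omega
      · simpa [List.get_eq_getElem] using h
    · exfalso
      rw [← lastA] at h
      have := (List.Nodup.get_inj_iff hndA (i := ⟨k, by omega⟩) (j := ⟨p+1, by omega⟩)).1 ?_
      · simp only [Fin.mk.injEq] at this; omega
      · simpa [List.get_eq_getElem] using h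
    · exact h
  have memB : ∀ k, (h0 : 0 < k) → (h1 : k < q + 1) → lB[k]'(by omega) ∈ B := by
    intro k h0 h1
    have hmem := hlB.getElem_mem' (show k < lB.length by omega)
    rcases hmem with h | h | h
    · exfalso
      rw [← zeroB] at h
      have := (List.Nodup.get_inj_iff hndB (i := ⟨k, by omega⟩) (j := ⟨0, by omega⟩)).1 ?_
      · simp only [Fin.mk.injEq] at this; omega
      · simpa [List.get_eq_getElem] using h
    · exfalso
      rw [← lastB] at h
      have := (List.Nodup.get_inj_iff hndB (i := ⟨k, by omega⟩) (j := ⟨q+1, by omega⟩)).1 ?_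
      · simp only [Fin.mk.injEq] at this; omega
      · simpa [List.get_eq_getElem] using h
    · exact h
  -- the cyclic enumeration
  set g : Fin m → V := fun i => if h : (i:ℕ) < p + 2 then lA[(i:ℕ)]'(by omega)
    else lB[m - (i:ℕ)]'(by omega) with hg
  have gA : ∀ (i : Fin m) (h : (i:ℕ) < p + 2), g i = lA[(i:ℕ)]'(by omega) := by
    intro i h; simp only [hg, dif_pos h]
  have gB : ∀ (i : Fin m) (h : ¬ (i:ℕ) < p + 2), g i = lB[m - (i:ℕ)]'(by omega) := by
    intro i h; simp only [hg, dif_neg h]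
  -- injectivity
  have gne : ∀ i j : Fin m, (i:ℕ) < (j:ℕ) → g i ≠ g j := by
    intro i j hij heq
    by_cases hi : (i:ℕ) < p + 2
    · by_cases hj : (j:ℕ) < p + 2
      · rw [gA i hi, gA j hj] at heq
        have := (List.Nodup.get_inj_iff hndA
          (i := ⟨(i:ℕ), by omega⟩) (j := ⟨(j:ℕ), by omega⟩)).1
          (by simpa [List.get_eq_getElem] using heq)
        simp only [Fin.mk.injEq] at this; omega
      · rw [gA i hi, gB j hj] at heq
        have hkj1 : 1 ≤ m - (j:ℕ) := by omega
        have hkj2 : m - (j:ℕ) ≤ q := by omega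
        rcases Nat.eq_zero_or_pos (i:ℕ) with hi0 | hi0
        · -- g i = x
          simp only [hi0] at heq
          rw [zeroA, ← zeroB] at heq
          have := (List.Nodup.get_inj_iff hndB
            (i := ⟨0, by omega⟩) (j := ⟨m - (j:ℕ), by omega⟩)).1
            (by simpa [List.get_eq_getElem] using heq)
          simp only [Fin.mk.injEq] at this; omega
        · rcases Nat.lt_or_ge (i:ℕ) (p+1) with hip | hip
          · -- g i ∈ A
            exact hAB _ (heq ▸ memA (i:ℕ) hi0 hip) (memB _ hkj1 (by omega))
          · -- i = p+1, g i = y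
            have hie : (i:ℕ) = p + 1 := by omega
            simp only [hie] at heq
            rw [lastA, ← lastB] at heq
            have := (List.Nodup.get_inj_iff hndB
              (i := ⟨q+1, by omega⟩) (j := ⟨m - (j:ℕ), by omega⟩)).1
              (by simpa [List.get_eq_getElem] using heq)
            simp only [Fin.mk.injEq] at this; omega
    · have hj : ¬ (j:ℕ) < p + 2 := by omega
      rw [gB i hi, gB j hj] at heq
      have := (List.Nodup.get_inj_iff hndB
        (i := ⟨m - (i:ℕ), by omega⟩) (j := ⟨m - (j:ℕ), by omega⟩)).1
        (by simpa [List.get_eq_getElem] using heq)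
      simp only [Fin.mk.injEq] at this
      have := i.isLt
      have := j.isLt
      omega
  -- key adjacency characterization
  have key : ∀ i j : Fin m, (i:ℕ) < (j:ℕ) →
      (G.Adj (g i) (g j) ↔ ((j:ℕ) = (i:ℕ) + 1 ∨ ((i:ℕ) = 0 ∧ (j:ℕ) = m - 1))) := by
    intro i j hij
    have hjm := j.isLt
    by_cases hj : (j:ℕ) < p + 2
    · -- both in the A part
      have hi : (i:ℕ) < p + 2 := by omega
      rw [gA i hi, gA j hj, hadjA (i:ℕ) (j:ℕ) hij (by omega)]
      constructor
      · intro h; exact Or.inl h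
      · rintro (h | ⟨h0, h1⟩)
        · exact h
        · omega
    · by_cases hi : (i:ℕ) < p + 2
      · -- i in A part, j in B part
        rw [gA i hi, gB j hj]
        set k := m - (j:ℕ) with hk
        have hk1 : 1 ≤ k := by omega
        have hkq : k ≤ q := by omega
        rcases Nat.eq_zero_or_pos (i:ℕ) with hi0 | hi0
        · -- x vs B part
          simp only [hi0]
          rw [zeroA, ← zeroB, hadjB 0 k hk1 (by omega)]
          constructor
          · intro h; right; exact ⟨trivial, by omega⟩
          · rintro (h | ⟨h0, h1⟩) <;> omega
        · rcases Nat.lt_or_ge (i:ℕ) (p+1) with hip | hip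
          · -- interior A vs B part
            constructor
            · intro h
              exact absurd h (hcross _ _ (memA (i:ℕ) hi0 hip) (memB k hk1 (by omega)))
            · rintro (h | ⟨h0, h1⟩) <;> omega
          · -- y vs B part
            have hie : (i:ℕ) = p + 1 := by omega
            simp only [hie]
            rw [lastA, ← lastB, G.adj_comm, hadjB k (q+1) (by omega) (by omega)]
            constructor
            · intro h
              -- k = q, so j = p + 2 = i + 1
              left; omega
            · rintro (h | ⟨h0, h1⟩)
              · omega
              · omega
      · -- both in B part
        rw [gB i hi, gB j hj]
        set ki := m - (i:ℕ) with hki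
        set kj := m - (j:ℕ) with hkj
        have hkik : kj < ki := by omega
        have hki2 : ki ≤ q + 1 := by omega
        rw [G.adj_comm, hadjB kj ki hkik (by omega)]
        constructor
        · intro h; left; omega
        · rintro (h | ⟨h0, h1⟩)
          · omega
          · omega
  -- build the embedding
  have main : ∀ a b : Fin m, G.Adj (g a) (g b) ↔ (SimpleGraph.cycleGraph m).Adj a b := by
    intro a b
    rw [SimpleGraph.cycleGraph_adj']
    rcases lt_trichotomy ((a:ℕ)) ((b:ℕ)) with h | h | h
    · rw [key a b h, fin_sub_val_big a b h, fin_sub_val_small a b h]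
      have := b.isLt
      constructor
      · rintro (h1 | ⟨h1, h2⟩)
        · right; omega
        · left; omega
      · rintro (h1 | h1)
        · right; constructor <;> omega
        · left; omega
    · have hab : a = b := Fin.ext h
      subst hab
      have h0 : ((a - a : Fin m)).val = 0 := by
        rw [Fin.sub_def]
        simp only
        rw [show m - (a:ℕ) + a = m by have := a.isLt; omega]
        simp
      constructor
      · intro h'; exact absurd h' (G.irrefl)
      · rintro (h' | h') <;> omega
    · rw [G.adj_comm, key b a h, fin_sub_val_big b a h, fin_sub_val_small b a h]
      have := a.isLt
      constructor
      · rintro (h1 | ⟨h1, h2⟩)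
        · left; omega
        · right; omega
      · rintro (h1 | h1)
        · left; omega
        · right; constructor <;> omega
  have ginj : Function.Injective g := by
    intro a b heq
    by_contra hne
    rcases lt_trichotomy ((a:ℕ)) ((b:ℕ)) with h | h | h
    · exact gne a b h heq
    · exact hne (Fin.ext h)
    · exact gne b a h heq.symm
  exact (hch m hm4).false ⟨⟨g, ginj⟩, fun {a b} => main a b⟩
end S3

section Dirac
variable {V : Type*} {G : SimpleGraph V}

/-- `v` is simplicial within `s` (its neighbors in `s` form a clique). -/
def SimpIn (G : SimpleGraph V) (s : Finset V) (v : V) : Prop :=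
  v ∈ s ∧ ∀ x ∈ s, ∀ y ∈ s, G.Adj v x → G.Adj v y → x ≠ y → G.Adj x y

def CliqueOn (G : SimpleGraph V) (s : Finset V) : Prop :=
  ∀ x ∈ s, ∀ y ∈ s, x ≠ y → G.Adj x y

lemma no_conn_pair {a b : V} (hab : a ≠ b) (hnadj : ¬ G.Adj a b) {t : Set V}
    (ht : t ⊆ {a, b}) : ¬ Conn G t a b := by
  rintro ⟨l, hc, hh, hl, hm⟩
  cases l with
  | nil => simp at hh
  | cons a' l' =>
    rw [List.head?_cons, Option.some_inj] at hh
    subst hh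
    cases l' with
    | nil =>
      rw [List.getLast?_singleton, Option.some_inj] at hl
      exact hab hl
    | cons z l'' =>
      rw [List.isChain_cons_cons] at hc
      have hzmem := hm z (by simp)
      rcases ht hzmem with hz | hz
      · rw [hz] at hc; exact G.irrefl hc.1
      · rw [hz] at hc; exact hnadj hc.1

lemma chain_reach_nbr {t t' : Set V} {a c z : V} {l : List V}
    (h : IsChainT G t a c l) (hz : z ∈ l) (hza : z ≠ a)
    (hstep : ∀ x ∈ l, x ≠ z → x ∈ t') :
    ∃ u, Conn G t' a u ∧ G.Adj z u := by
  obtain ⟨l1, l2, hsplit, hzl1⟩ := exists_first_split hz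
  obtain ⟨hc, hh, hl, hm⟩ := h
  subst hsplit
  have hl1ne : l1 ≠ [] := by
    rintro rfl
    rw [List.nil_append, List.head?_cons, Option.some_inj] at hh
    exact hza hh
  obtain ⟨hc1, hc2, hjun⟩ := List.isChain_append.1 hc
  have hadj : G.Adj (l1.getLast hl1ne) z :=
    hjun _ (List.getLast?_eq_getLast hl1ne) z rfl
  refine ⟨l1.getLast hl1ne, ⟨l1, hc1, ?_, List.getLast?_eq_getLast hl1ne, ?_⟩, hadj.symm⟩
  · cases l1 with
    | nil => exact absurd rfl hl1ne
    | cons w l1' =>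
      rw [List.cons_append, List.head?_cons, Option.some_inj] at hh
      rw [List.head?_cons, Option.some_inj]
      exact hh
  · intro x hx
    exact hstep x (List.mem_append_left _ hx) (fun e => hzl1 (e ▸ hx))

theorem dirac_strong [Fintype V] (hch : Chordal G) :
    ∀ (N : ℕ) (s : Finset V), s.card ≤ N → s.Nonempty →
      CliqueOn G s ∨ ∃ a, a ∈ s ∧ ∃ b, b ∈ s ∧ a ≠ b ∧ ¬ G.Adj a b ∧
        SimpIn G s a ∧ SimpIn G s b := by
  classical
  intro N
  induction N with
  | zero =>
    intro s hcard hne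
    have := hne.card_pos
    omega
  | succ N ih =>
    intro s hcard hne
    by_cases hclq : CliqueOn G s
    · exact Or.inl hclq
    right
    rw [CliqueOn] at hclq
    push_neg at hclq
    obtain ⟨a, ha, b, hb, hab, hnadj⟩ := hclq
    -- minimal separator
    set F := (s.powerset).filter
      (fun S => a ∉ S ∧ b ∉ S ∧ ¬ Conn G (↑(s \ S) : Set V) a b) with hFdef
    have hF0 : s \ {a, b} ∈ F := by
      refine Finset.mem_filter.2 ⟨Finset.mem_powerset.2 Finset.sdiff_subset, ?_, ?_, ?_⟩
      · simp [Finset.mem_sdiff, ha]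
      · simp [Finset.mem_sdiff, hb]
      · refine no_conn_pair hab hnadj (fun v hv => ?_)
        simp only [Finset.coe_sdiff, Set.mem_diff, Finset.mem_coe, Finset.mem_sdiff,
          Finset.mem_insert, Finset.mem_singleton, not_and, not_not] at hv
        have := hv.2 hv.1
        simpa using this
    obtain ⟨S, hSF, hSmin⟩ := Finset.exists_min_image F Finset.card ⟨_, hF0⟩
    have hSmem := Finset.mem_filter.1 hSF
    have hSsub : S ⊆ s := Finset.mem_powerset.1 hSmem.1
    have haS : a ∉ S := hSmem.2.1
    have hbS : b ∉ S := hSmem.2.2.1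
    have hSsep : ¬ Conn G (↑(s \ S) : Set V) a b := hSmem.2.2.2
    set t : Set V := (↑(s \ S) : Set V) with htdef
    set A : Set V := {v | Conn G t a v} with hAdef
    set B : Set V := {v | Conn G t b v} with hBdef
    have hat : a ∈ t := by simp [htdef, ha, haS]
    have hbt : b ∈ t := by simp [htdef, hb, hbS]
    have haA : a ∈ A := conn_refl hat
    have hbB : b ∈ B := conn_refl hbt
    have hAt : ∀ v, v ∈ A → v ∈ t := fun v hv => (conn_mem hv).2
    have hBt : ∀ v, v ∈ B → v ∈ t := fun v hv => (conn_mem hv).2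
    have hdisj : ∀ v, v ∈ A → v ∈ B → False :=
      fun v hva hvb => hSsep (conn_trans hva (conn_symm hvb))
    have hext : ∀ u v, u ∈ A → G.Adj u v → v ∈ t → v ∈ A :=
      fun u v hu hadj hv => conn_trans hu (conn_adj hadj (hAt u hu) hv)
    have hextB : ∀ u v, u ∈ B → G.Adj u v → v ∈ t → v ∈ B :=
      fun u v hu hadj hv => conn_trans hu (conn_adj hadj (hBt u hu) hv)
    have hcross : ∀ u v, u ∈ A → v ∈ B → ¬ G.Adj u v :=
      fun u v hu hv hadj => hdisj v (hext u v hu hadj (hBt v hv)) hv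
    have hreachA : ∀ u, u ∈ A → Conn G A a u := by
      rintro u ⟨l, hl⟩
      exact ⟨l, hl.1, hl.2.1, hl.2.2.1, fun x hx => hl.conn_of_mem hx⟩
    have hreachB : ∀ u, u ∈ B → Conn G B b u := by
      rintro u ⟨l, hl⟩
      exact ⟨l, hl.1, hl.2.1, hl.2.2.1, fun x hx => hl.conn_of_mem hx⟩
    -- every separator vertex has neighbors on both sides
    have hnbr : ∀ z ∈ S, (∃ u, u ∈ A ∧ G.Adj z u) ∧ (∃ u, u ∈ B ∧ G.Adj z u) := by
      intro z hz
      have hcard' : (S.erase z).card < S.card := Finset.card_erase_lt_of_mem hz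
      have hconn : Conn G (↑(s \ S.erase z) : Set V) a b := by
        by_contra hnc
        have hmem : S.erase z ∈ F := Finset.mem_filter.2
          ⟨Finset.mem_powerset.2 ((Finset.erase_subset _ _).trans hSsub),
            fun h => haS (Finset.mem_of_mem_erase h),
            fun h => hbS (Finset.mem_of_mem_erase h), hnc⟩
        have := hSmin _ hmem
        omega
      obtain ⟨l, hl⟩ := hconn
      have hzl : z ∈ l := by
        by_contra hzl
        refine hSsep ⟨l, hl.1, hl.2.1, hl.2.2.1, fun x hx => ?_⟩
        have hxm := hl.2.2.2 x hx
        simp only [Finset.coe_sdiff, Set.mem_diff, Finset.mem_coe] at hxm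
        simp only [htdef, Finset.coe_sdiff, Set.mem_diff, Finset.mem_coe]
        refine ⟨hxm.1, fun hxS => hxm.2 (Finset.mem_erase.2 ⟨?_, hxS⟩)⟩
        rintro rfl
        exact hzl hx
      have hstep : ∀ x ∈ l, x ≠ z → x ∈ t := by
        intro x hx hxz
        have hxm := hl.2.2.2 x hx
        simp only [Finset.coe_sdiff, Set.mem_diff, Finset.mem_coe] at hxm
        simp only [htdef, Finset.coe_sdiff, Set.mem_diff, Finset.mem_coe]
        exact ⟨hxm.1, fun hxS => hxm.2 (Finset.mem_erase.2 ⟨hxz, hxS⟩)⟩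
      constructor
      · exact chain_reach_nbr hl hzl (fun e => haS (e ▸ hz)) hstep
      · refine chain_reach_nbr hl.reverse (by simpa using hzl)
          (fun e => hbS (e ▸ hz)) (fun x hx hxz => hstep x (by simpa using hx) hxz)
    -- the separator is a clique
    have hSclq : ∀ x ∈ S, ∀ y ∈ S, x ≠ y → G.Adj x y := by
      intro x hx y hy hxy
      by_contra hnadj'
      obtain ⟨⟨ux, huxA, hadjux⟩, ⟨vx, hvxB, hadjvx⟩⟩ := hnbr x hx
      obtain ⟨⟨uy, huyA, hadjuy⟩, ⟨vy, hvyB, hadjvy⟩⟩ := hnbr y hy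
      have hxt : x ∉ t := by simp [htdef, hSsub hx, hx]
      have hyt : y ∉ t := by simp [htdef, hSsub hy, hy]
      have hxA : x ∉ A := fun h => hxt (hAt _ h)
      have hyA : y ∉ A := fun h => hyt (hAt _ h)
      have hxB : x ∉ B := fun h => hxt (hBt _ h)
      have hyB : y ∉ B := fun h => hyt (hBt _ h)
      have hsubA : A ⊆ insert x (insert y A) :=
        fun v hv => Set.mem_insert_of_mem _ (Set.mem_insert_of_mem _ hv)
      have hsubB : B ⊆ insert x (insert y B) :=
        fun v hv => Set.mem_insert_of_mem _ (Set.mem_insert_of_mem _ hv)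
      have hConnA : Conn G (insert x (insert y A)) x y := by
        refine conn_cons hadjux (Set.mem_insert _ _) (conn_trans
          (conn_mono hsubA (conn_trans (conn_symm (hreachA ux huxA)) (hreachA uy huyA)))
          (conn_adj hadjuy.symm (hsubA huyA)
            (Set.mem_insert_of_mem _ (Set.mem_insert _ _))))
      have hConnB : Conn G (insert x (insert y B)) x y := by
        refine conn_cons hadjvx (Set.mem_insert _ _) (conn_trans
          (conn_mono hsubB (conn_trans (conn_symm (hreachB vx hvxB)) (hreachB vy hvyB)))
          (conn_adj hadjvy.symm (hsubB hvyB)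
            (Set.mem_insert_of_mem _ (Set.mem_insert _ _))))
      exact chordal_no_cycle hch hdisj hcross hxA hyA hxB hyB hxy hnadj' hConnA hConnB
    -- from each side extract a simplicial vertex of `s`
    have side : ∀ (c : V) (C : Set V), c ∈ C →
        (∀ v, v ∈ C → v ∈ t) →
        (∀ u v, u ∈ C → G.Adj u v → v ∈ t → v ∈ C) →
        (∃ w, w ∈ s ∧ w ∉ C ∧ w ∉ S) →
        ∃ u, u ∈ C ∧ SimpIn G s u := by
      rintro c C hcC hCt hCext ⟨w, hws, hwC, hwS⟩
      set CF := (s \ S).filter (fun v => v ∈ C) with hCFdef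
      set tA := CF ∪ S with htAdef
      have hCFC : ∀ v, v ∈ CF → v ∈ C := fun v hv => (Finset.mem_filter.1 hv).2
      have hcCF : c ∈ CF := by
        refine Finset.mem_filter.2 ⟨?_, hcC⟩
        have := hCt c hcC
        simpa [htdef] using this
      have htAs : tA ⊆ s := by
        intro v hv
        rcases Finset.mem_union.1 hv with hv | hv
        · exact (Finset.mem_sdiff.1 (Finset.mem_filter.1 hv).1).1
        · exact hSsub hv
      have hwtA : w ∉ tA := by
        intro hw
        rcases Finset.mem_union.1 hw with hw | hw
        · exact hwC (hCFC _ hw)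
        · exact hwS hw
      have hcardlt : tA.card < s.card :=
        Finset.card_lt_card ((Finset.ssubset_iff_of_subset htAs).2 ⟨w, hws, hwtA⟩)
      have hnbh : ∀ u, u ∈ CF → ∀ v, v ∈ s → G.Adj u v → v ∈ tA := by
        intro u hu v hvs hadj
        by_cases hvS : v ∈ S
        · exact Finset.mem_union_right _ hvS
        · have hvt : v ∈ t := by simp [htdef, hvs, hvS]
          have hvC : v ∈ C := hCext u v (hCFC _ hu) hadj hvt
          exact Finset.mem_union_left _ (Finset.mem_filter.2 ⟨by simp [hvs, hvS], hvC⟩)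
      have hrec := ih tA (by omega) ⟨c, Finset.mem_union_left _ hcCF⟩
      have process : ∀ u, SimpIn G tA u → u ∉ S → ∃ u', u' ∈ C ∧ SimpIn G s u' := by
        intro u hu huS
        have huCF : u ∈ CF := by
          rcases Finset.mem_union.1 hu.1 with h | h
          · exact h
          · exact absurd h huS
        refine ⟨u, hCFC _ huCF, htAs hu.1, ?_⟩
        intro x' hx' y' hy' hax hay hxy
        exact hu.2 x' (hnbh u huCF x' hx' hax) y' (hnbh u huCF y' hy' hay) hax hay hxy
      rcases hrec with hclq' | ⟨u1, hu1, u2, hu2, hne12, hnadj12, hs1, hs2⟩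
      · refine ⟨c, hcC, htAs (Finset.mem_union_left _ hcCF), ?_⟩
        intro x' hx' y' hy' hax hay hxy
        exact hclq' x' (hnbh c hcCF x' hx' hax) y' (hnbh c hcCF y' hy' hay) hxy
      · have hone : u1 ∉ S ∨ u2 ∉ S := by
          by_contra hcon
          push_neg at hcon
          exact hnadj12 (hSclq u1 hcon.1 u2 hcon.2 hne12)
        rcases hone with h1 | h2
        · exact process u1 hs1 h1
        · exact process u2 hs2 h2
    obtain ⟨uA, huA, hsA⟩ := side a A haA hAt hext
      ⟨b, hb, fun h => hdisj b h hbB, hbS⟩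
    obtain ⟨uB, huB, hsB⟩ := side b B hbB hBt hextB
      ⟨a, ha, fun h => hdisj a haA h, haS⟩
    exact ⟨uA, hsA.1, uB, hsB.1, fun e => hdisj uA huA (e ▸ huB),
      hcross uA uB huA huB, hsA, hsB⟩

theorem exists_simplicial [Fintype V] (hch : Chordal G) (s : Finset V) (hne : s.Nonempty) :
    ∃ v, SimpIn G s v := by
  rcases dirac_strong hch s.card s le_rfl hne with hclq | ⟨a, ha, b, hb, -, -, hsa, -⟩
  · obtain ⟨v, hv⟩ := hne
    exact ⟨v, hv, fun x hx y hy hax hay hxy => hclq x hx y hy hxy⟩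
  · exact ⟨a, hsa⟩
end Dirac

section PEO
variable {V : Type*} {G : SimpleGraph V}

def PEOList (G : SimpleGraph V) : List V → Prop
  | [] => True
  | a :: l => (∀ x ∈ l, ∀ y ∈ l, G.Adj a x → G.Adj a y → x ≠ y → G.Adj x y) ∧ PEOList G l

lemma peoList_cons {a : V} {l : List V} : PEOList G (a :: l) ↔
    (∀ x ∈ l, ∀ y ∈ l, G.Adj a x → G.Adj a y → x ≠ y → G.Adj x y) ∧ PEOList G l :=
  Iff.rfl

lemma exists_peo_list [Fintype V] [DecidableEq V] (hch : Chordal G) :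
    ∀ (N : ℕ) (s : Finset V), s.card ≤ N →
      ∃ l : List V, l.Nodup ∧ l.toFinset = s ∧ PEOList G l := by
  intro N
  induction N with
  | zero =>
    intro s hcard
    have : s = ∅ := Finset.card_eq_zero.1 (by omega)
    subst this
    exact ⟨[], by simp, by simp, trivial⟩
  | succ N ih =>
    intro s hcard
    rcases s.eq_empty_or_nonempty with rfl | hne
    · exact ⟨[], by simp, by simp, trivial⟩
    obtain ⟨v, hv⟩ := exists_simplicial hch s hne
    obtain ⟨l', hnd, hfin, hpeo⟩ := ih (s.erase v) (by
      have h1 := Finset.card_erase_of_mem hv.1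
      have h2 := hne.card_pos
      omega)
    refine ⟨v :: l', ?_, ?_, ?_⟩
    · rw [List.nodup_cons]
      refine ⟨?_, hnd⟩
      rw [← List.mem_toFinset, hfin]
      simp
    · rw [List.toFinset_cons, hfin, Finset.insert_erase hv.1]
    · rw [peoList_cons]
      refine ⟨?_, hpeo⟩
      intro x hx y hy hax hay hxy
      have hxs : x ∈ s := Finset.mem_of_mem_erase (by rw [← hfin]; exact List.mem_toFinset.2 hx)
      have hys : y ∈ s := Finset.mem_of_mem_erase (by rw [← hfin]; exact List.mem_toFinset.2 hy)
      exact hv.2 x hxs y hys hax hay hxy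

lemma get_cons_pos {a : V} {tl : List V} (j : Fin (a :: tl).length) (h : 0 < (j : ℕ)) :
    (a :: tl).get j = tl.get ⟨(j : ℕ) - 1, by
      have := j.isLt; simp only [List.length_cons] at this; omega⟩ := by
  rcases j with ⟨jv, hjv⟩
  cases jv with
  | zero => simp at h
  | succ m => rfl

lemma peo_get {l : List V} (hnd : l.Nodup) (hpeo : PEOList G l) :
    ∀ (i j k : Fin l.length), (i : ℕ) < j → (i : ℕ) < k → j ≠ k →
      G.Adj (l.get i) (l.get j) → G.Adj (l.get i) (l.get k) → G.Adj (l.get j) (l.get k) := by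
  induction l with
  | nil => intro i; exact i.elim0
  | cons a tl ih =>
    intro i j k hij hik hjk h1 h2
    have hndtl : tl.Nodup := (List.nodup_cons.1 hnd).2
    have hj0 : 0 < (j : ℕ) := by omega
    have hk0 : 0 < (k : ℕ) := by omega
    rw [get_cons_pos j hj0] at h1 ⊢
    rw [get_cons_pos k hk0] at h2 ⊢
    rcases Nat.eq_zero_or_pos (i : ℕ) with hi0 | hi0
    · -- head clause
      have hia : (a :: tl).get i = a := by
        rcases i with ⟨iv, hiv⟩
        simp only [Fin.val_mk] at hi0
        subst hi0
        rfl
      rw [hia] at h1 h2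
      refine (peoList_cons.1 hpeo).1 _ (List.get_mem _ _) _ (List.get_mem _ _) h1 h2 ?_
      rw [Ne, List.Nodup.get_inj_iff hndtl]
      simp only [Fin.mk.injEq]
      intro e
      exact hjk (Fin.ext (by omega))
    · rw [get_cons_pos i hi0] at h1 h2
      refine ih hndtl (peoList_cons.1 hpeo).2 _ _ _ ?_ ?_ ?_ h1 h2
      · simp only [Fin.val_mk]; omega
      · simp only [Fin.val_mk]; omega
      · simp only [Ne, Fin.mk.injEq]
        intro e
        exact hjk (Fin.ext (by omega))
end PEO

section Greedy
variable {V : Type*} (G : SimpleGraph V) [DecidableRel G.Adj]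
variable {n : ℕ} (σ : Fin n → V)

/-- later neighbors of `i` in the ordering. -/
def laterNbr (i : Fin n) : Finset (Fin n) :=
  Finset.univ.filter (fun j => i < j ∧ G.Adj (σ i) (σ j))

def earlierNbr (i : Fin n) : Finset (Fin n) :=
  Finset.univ.filter (fun j => j < i ∧ G.Adj (σ i) (σ j))

/-- the designated distinguished neighbor. -/
def fnext (i : Fin n) : Option (Fin n) :=
  if h : (laterNbr G σ i).Nonempty then some ((laterNbr G σ i).min' h)
  else if h' : (earlierNbr G σ i).Nonempty then some ((earlierNbr G σ i).max' h') else none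

/-- the set of later vertices whose color must be avoided when coloring `i`. -/
def touse (i : Fin n) : Finset (Fin n) :=
  laterNbr G σ i ∪
    ((laterNbr G σ i).biUnion (fun j => (fnext G σ j).toFinset)).filter (fun w => i < w)

lemma mem_laterNbr {i j : Fin n} : j ∈ laterNbr G σ i ↔ i < j ∧ G.Adj (σ i) (σ j) := by
  simp [laterNbr]

lemma mem_earlierNbr {i j : Fin n} : j ∈ earlierNbr G σ i ↔ j < i ∧ G.Adj (σ i) (σ j) := by
  simp [earlierNbr]

lemma touse_gt {i j : Fin n} (h : j ∈ touse G σ i) : i < j := by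
  rcases Finset.mem_union.1 h with h | h
  · exact ((mem_laterNbr G σ).1 h).1
  · exact (Finset.mem_filter.1 h).2

lemma laterNbr_card [Fintype V] (hσ : Function.Injective σ) (i : Fin n) :
    (laterNbr G σ i).card ≤ G.maxDegree := by
  have h1 : (laterNbr G σ i).card ≤ (G.neighborFinset (σ i)).card := by
    apply Finset.card_le_card_of_injOn σ
    · intro j hj
      rw [Finset.mem_coe, SimpleGraph.mem_neighborFinset]
      exact ((mem_laterNbr G σ).1 hj).2
    · exact fun a _ b _ hab => hσ hab
  rw [SimpleGraph.card_neighborFinset_eq_degree] at h1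
  exact h1.trans (G.degree_le_maxDegree _)

lemma option_toFinset_card_le {α : Type*} (o : Option α) : o.toFinset.card ≤ 1 := by
  cases o <;> simp

lemma touse_card [Fintype V] (hσ : Function.Injective σ) (i : Fin n) :
    (touse G σ i).card ≤ 2 * G.maxDegree := by
  refine (Finset.card_union_le _ _).trans ?_
  have h1 := laterNbr_card G σ hσ i
  have h2 : (((laterNbr G σ i).biUnion (fun j => (fnext G σ j).toFinset)).filter
      (fun w => i < w)).card ≤ G.maxDegree := by
    refine (Finset.card_filter_le _ _).trans ?_
    refine (Finset.card_biUnion_le).trans ?_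
    refine le_trans (Finset.sum_le_card_nsmul _ _ 1
      (fun j _ => option_toFinset_card_le _)) ?_
    simpa using h1
  omega

def greedy (K : ℕ) (hK0 : 0 < K) (i : Fin n) : Fin K :=
  let F := (touse G σ i).attach.image (fun j => greedy K hK0 j.1)
  if h : (Finset.univ \ F).Nonempty then (Finset.univ \ F).min' h else ⟨0, hK0⟩
termination_by n - i.val
decreasing_by
  have := touse_gt G σ j.2
  rw [Fin.lt_def] at this
  omega

lemma greedy_ne {K : ℕ} (hK0 : 0 < K) (hK : ∀ i : Fin n, (touse G σ i).card < K)
    {i j : Fin n} (h : j ∈ touse G σ i) :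
    greedy G σ K hK0 i ≠ greedy G σ K hK0 j := by
  intro e
  have hne : (Finset.univ \ (touse G σ i).attach.image
      (fun j => greedy G σ K hK0 j.1)).Nonempty := by
    rw [← Finset.card_pos, Finset.card_sdiff_of_subset (Finset.subset_univ _)]
    have h1 : ((touse G σ i).attach.image (fun j => greedy G σ K hK0 j.1)).card < K :=
      lt_of_le_of_lt (le_trans Finset.card_image_le (by rw [Finset.card_attach])) (hK i)
    have h2 : (Finset.univ : Finset (Fin K)).card = K := by simp
    omega
  have hmem : greedy G σ K hK0 i ∈ Finset.univ \
      (touse G σ i).attach.image (fun j => greedy G σ K hK0 j.1) := by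
    rw [greedy, dif_pos hne]
    exact Finset.min'_mem _ _
  have := (Finset.mem_sdiff.1 hmem).2
  exact this (Finset.mem_image.2 ⟨⟨j, h⟩, Finset.mem_attach _ _, e.symm ▸ rfl⟩)

lemma fnext_adj {i w : Fin n} (h : fnext G σ i = some w) : G.Adj (σ i) (σ w) := by
  unfold fnext at h
  split_ifs at h with h1 h2
  · rw [Option.some_inj] at h
    exact ((mem_laterNbr G σ).1 (h ▸ Finset.min'_mem _ h1)).2
  · rw [Option.some_inj] at h
    exact ((mem_earlierNbr G σ).1 (h ▸ Finset.max'_mem _ h2)).2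

lemma fnext_none {i j : Fin n} (h : fnext G σ i = none) (hadj : G.Adj (σ i) (σ j)) :
    False := by
  unfold fnext at h
  split_ifs at h with h1 h2
  rcases lt_trichotomy i j with hij | hij | hij
  · exact h1 ⟨j, (mem_laterNbr G σ).2 ⟨hij, hadj⟩⟩
  · exact G.irrefl (hij ▸ hadj)
  · exact h2 ⟨j, (mem_earlierNbr G σ).2 ⟨hij, hadj⟩⟩

lemma greedy_udiff {K : ℕ} (hK0 : 0 < K) (hK : ∀ i : Fin n, (touse G σ i).card < K)
    (hpeo : ∀ i j k : Fin n, i < j → i < k → j ≠ k →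
      G.Adj (σ i) (σ j) → G.Adj (σ i) (σ k) → G.Adj (σ j) (σ k))
    {i w j : Fin n} (hf : fnext G σ i = some w) (hadj : G.Adj (σ i) (σ j)) (hjw : j ≠ w) :
    greedy G σ K hK0 j ≠ greedy G σ K hK0 w := by
  rcases lt_trichotomy j i with hji | heq | hij
  · -- j is an earlier neighbor of i
    have hiLj : i ∈ laterNbr G σ j := (mem_laterNbr G σ).2 ⟨hji, hadj.symm⟩
    have hjw' : j < w := by
      unfold fnext at hf
      split_ifs at hf with h1 h2
      · rw [Option.some_inj] at hf
        have := ((mem_laterNbr G σ).1 (hf ▸ Finset.min'_mem _ h1)).1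
        exact hji.trans this
      · rw [Option.some_inj] at hf
        have hje : j ∈ earlierNbr G σ i := (mem_earlierNbr G σ).2 ⟨hji, hadj⟩
        have := Finset.le_max' _ j hje
        rw [hf] at this
        exact lt_of_le_of_ne this (fun e => hjw e)
    have hmem : w ∈ touse G σ j := by
      refine Finset.mem_union_right _ (Finset.mem_filter.2 ⟨?_, hjw'⟩)
      exact Finset.mem_biUnion.2 ⟨i, hiLj, by simp [hf]⟩
    exact greedy_ne G σ hK0 hK hmem
  · subst heq
    exact absurd hadj (G.irrefl)
  · -- j is a later neighbor, so w is the min later neighbor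
    have hne : (laterNbr G σ i).Nonempty := ⟨j, (mem_laterNbr G σ).2 ⟨hij, hadj⟩⟩
    have hw : w = (laterNbr G σ i).min' hne := by
      unfold fnext at hf
      rw [dif_pos hne, Option.some_inj] at hf
      exact hf.symm
    have hwL : w ∈ laterNbr G σ i := hw ▸ Finset.min'_mem _ hne
    have hwle : w ≤ j := hw ▸ Finset.min'_le _ _ ((mem_laterNbr G σ).2 ⟨hij, hadj⟩)
    have hwlt : w < j := lt_of_le_of_ne hwle (fun e => hjw e.symm)
    have hadjw : G.Adj (σ w) (σ j) :=
      hpeo i w j ((mem_laterNbr G σ).1 hwL).1 hij (fun e => hjw e.symm)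
        ((mem_laterNbr G σ).1 hwL).2 hadj
    have hmem : j ∈ touse G σ w :=
      Finset.mem_union_left _ ((mem_laterNbr G σ).2 ⟨hwlt, hadjw⟩)
    exact (greedy_ne G σ hK0 hK hmem).symm

lemma greedy_pcf (σ' : Fin n ≃ V) {K : ℕ} (hK0 : 0 < K)
    (hK : ∀ i : Fin n, (touse G (⇑σ') i).card < K)
    (hpeo : ∀ i j k : Fin n, i < j → i < k → j ≠ k →
      G.Adj (σ' i) (σ' j) → G.Adj (σ' i) (σ' k) → G.Adj (σ' j) (σ' k)) :
    IsPCFColoring G (fun v => greedy G (⇑σ') K hK0 (σ'.symm v)) := by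
  constructor
  · intro u v hadj
    have hadj' : G.Adj (σ' (σ'.symm u)) (σ' (σ'.symm v)) := by
      simpa using hadj
    rcases lt_trichotomy (σ'.symm u) (σ'.symm v) with h | h | h
    · exact greedy_ne G (⇑σ') hK0 hK
        (Finset.mem_union_left _ ((mem_laterNbr G _).2 ⟨h, hadj'⟩))
    · exact absurd (h ▸ hadj') (G.irrefl)
    · exact (greedy_ne G (⇑σ') hK0 hK
        (Finset.mem_union_left _ ((mem_laterNbr G _).2 ⟨h, hadj'.symm⟩))).symm
  · intro v hne
    obtain ⟨u, hu⟩ := hne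
    rw [SimpleGraph.mem_neighborSet] at hu
    have hadj' : G.Adj (σ' (σ'.symm v)) (σ' (σ'.symm u)) := by simpa using hu
    rcases hfn : fnext G (⇑σ') (σ'.symm v) with _ | w
    · exact absurd hadj' (fun h => fnext_none G (⇑σ') hfn h)
    refine ⟨greedy G (⇑σ') K hK0 w, σ' w, ⟨?_, ?_⟩, ?_⟩
    · rw [SimpleGraph.mem_neighborSet]
      have := fnext_adj G (⇑σ') hfn
      simpa using this
    · simp
    · rintro u' ⟨hu', hcu'⟩
      rw [SimpleGraph.mem_neighborSet] at hu'
      have hadjj : G.Adj (σ' (σ'.symm v)) (σ' (σ'.symm u')) := by simpa using hu'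
      by_cases hjw : σ'.symm u' = w
      · rw [← hjw]; simp
      · exact absurd hcu' (greedy_udiff G (⇑σ') hK0 hK hpeo hfn hadjj hjw)
end Greedy

theorem pcf_chordal {V : Type*} [Fintype V] (G : SimpleGraph V)
    [DecidableRel G.Adj] (hchordal : Chordal G) :
    pcfChromNum G ≤ 2 * G.maxDegree + 1 := by
  classical
  obtain ⟨l, hnd, hfin, hpeo⟩ :=
    exists_peo_list hchordal (Finset.univ.card) (Finset.univ : Finset V) le_rfl
  have hmem : ∀ x : V, x ∈ l := fun x => by
    rw [← List.mem_toFinset, hfin]; exact Finset.mem_univ x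
  set σ' : Fin l.length ≃ V := List.Nodup.getEquivOfForallMemList l hnd hmem with hσ'
  have happ : ∀ i, σ' i = l.get i := fun i => rfl
  have hpeo' : ∀ i j k : Fin l.length, i < j → i < k → j ≠ k →
      G.Adj (σ' i) (σ' j) → G.Adj (σ' i) (σ' k) → G.Adj (σ' j) (σ' k) := by
    intro i j k hij hik hjk h1 h2
    rw [happ, happ] at h1 h2
    rw [happ, happ]
    exact peo_get hnd hpeo i j k hij hik hjk h1 h2
  have hK : ∀ i : Fin l.length, (touse G (⇑σ') i).card < 2 * G.maxDegree + 1 :=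
    fun i => Nat.lt_succ_of_le (touse_card G (⇑σ') σ'.injective i)
  have hc := greedy_pcf G σ' (by omega) hK hpeo'
  exact Nat.sInf_le ⟨_, hc⟩
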